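/- arXiv:2604.26336 — 7 statements merged into one kernel-verified Lean document; each statement's English description precedes it below -/
import Mathlib

section
/- (Local discrete maximum principle with respect to DOFs, Theorem 4.2.) Assume ∑_{j=1}^N s_{ij} = 0 for every i (zero row sums), m_i > 0 for every i, Δt ≥ 0, and the CFL condition Δt·(s_{ii} − v_{ii}) ≤ m_i for every i, where V is the minimum viscosity matrix of S. Then for every i, the low-order update U'_i = U_i − (Δt/m_i) ∑_{j=1}^N (s_{ij} − v_{ij}) U_j satisfies min_{j ∈ J_i} U_j ≤ U'_i ≤ max_{j ∈ J_i} U_j, where J_i := {i} ∪ {j ≠ i : s_{ij} ≠ 0 or s_{ji} ≠ 0}. In particular, if u_min ≤ U_j ≤ u_max for all j, then u_min ≤ U'_j ≤ u_max for all j. -/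
open Finset in
/-- Local discrete maximum principle with respect to DOFs (Theorem 4.2): with the
minimum viscosity matrix `V` of `S` and under the CFL condition
`Δt * (S i i - V i i) ≤ m i`, each component of the low-order update is bounded by
the extrema of the previous values over the neighbor set
`J i = {i} ∪ {j ≠ i : S i j ≠ 0 ∨ S j i ≠ 0}`; in particular any uniform bounds on
`U` are preserved. -/
theorem local_discrete_maximum_principle
    (N : ℕ) (S V : Fin N → Fin N → ℝ)
    (hVoff : ∀ i j, i ≠ j → V i j = max 0 (max (S i j) (S j i)))
    (hVdiag : ∀ i, V i i = -∑ j ∈ univ.erase i, V i j)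
    (hrow : ∀ i, ∑ j, S i j = 0)
    (m : Fin N → ℝ) (hm : ∀ i, 0 < m i)
    (Δt : ℝ) (hΔt : 0 ≤ Δt)
    (hCFL : ∀ i, Δt * (S i i - V i i) ≤ m i)
    (U U' : Fin N → ℝ)
    (hU' : ∀ i, U' i = U i - (Δt / m i) * ∑ j, (S i j - V i j) * U j) :
    (∀ i,
      (insert i (univ.filter fun j => j ≠ i ∧ (S i j ≠ 0 ∨ S j i ≠ 0))).inf'
          ⟨i, Finset.mem_insert_self i _⟩ U ≤ U' i ∧
      U' i ≤ (insert i (univ.filter fun j => j ≠ i ∧ (S i j ≠ 0 ∨ S j i ≠ 0))).sup'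
          ⟨i, Finset.mem_insert_self i _⟩ U) ∧
    (∀ umin umax : ℝ, (∀ j, umin ≤ U j ∧ U j ≤ umax) →
      ∀ j, umin ≤ U' j ∧ U' j ≤ umax) := by
  have hVrow : ∀ i, ∑ j, V i j = 0 := by
    intro i
    rw [← Finset.add_sum_erase _ _ (Finset.mem_univ i), hVdiag i]
    ring
  -- convex combination representation
  have key : ∀ i, ∃ c : Fin N → ℝ,
      (∀ j, 0 ≤ c j) ∧ (∑ j, c j = 1) ∧ (U' i = ∑ j, c j * U j) ∧
      (∀ j, c j ≠ 0 →
        j ∈ insert i (univ.filter fun j => j ≠ i ∧ (S i j ≠ 0 ∨ S j i ≠ 0))) := by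
    intro i
    refine ⟨fun j => (if j = i then (1:ℝ) else 0) - (Δt / m i) * (S i j - V i j),
      ?_, ?_, ?_, ?_⟩
    · intro j
      by_cases hj : j = i
      · subst hj
        simp only [eq_self_iff_true, if_true]
        have h1 : Δt * (S j j - V j j) / m j ≤ 1 :=
          (div_le_one (hm j)).mpr (hCFL j)
        have h2 : Δt / m j * (S j j - V j j) = Δt * (S j j - V j j) / m j := by ring
        rw [h2]
        linarith
      · simp only [if_neg hj]
        have hV : V i j = max 0 (max (S i j) (S j i)) := hVoff i j (Ne.symm hj)
        have h1 : S i j - V i j ≤ 0 := by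
          have : S i j ≤ max 0 (max (S i j) (S j i)) :=
            le_max_of_le_right (le_max_left _ _)
          linarith [hV ▸ this]
        have h2 : 0 ≤ Δt / m i := div_nonneg hΔt (hm i).le
        nlinarith
    · rw [Finset.sum_sub_distrib, ← Finset.mul_sum, Finset.sum_sub_distrib,
        hrow i, hVrow i, Finset.sum_ite_eq' univ i (fun _ => (1:ℝ))]
      simp
    · rw [hU', Finset.mul_sum]
      rw [show U i = ∑ j, (if j = i then (1:ℝ) else 0) * U j by
        simp [ite_mul]]
      rw [← Finset.sum_sub_distrib]
      apply Finset.sum_congr rfl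
      intro j _
      ring
    · intro j hc
      by_cases hj : j = i
      · subst hj; exact Finset.mem_insert_self j _
      · by_cases hs : S i j ≠ 0 ∨ S j i ≠ 0
        · exact Finset.mem_insert_of_mem (Finset.mem_filter.mpr
            ⟨Finset.mem_univ j, hj, hs⟩)
        · exfalso
          push_neg at hs
          have hV : V i j = max 0 (max (S i j) (S j i)) := hVoff i j (Ne.symm hj)
          rw [hs.1, hs.2] at hV
          simp at hV
          apply hc
          simp only [if_neg hj, hV, hs.1]
          ring
  have main : ∀ i,
      (insert i (univ.filter fun j => j ≠ i ∧ (S i j ≠ 0 ∨ S j i ≠ 0))).inf'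
          ⟨i, Finset.mem_insert_self i _⟩ U ≤ U' i ∧
      U' i ≤ (insert i (univ.filter fun j => j ≠ i ∧ (S i j ≠ 0 ∨ S j i ≠ 0))).sup'
          ⟨i, Finset.mem_insert_self i _⟩ U := by
    intro i
    obtain ⟨c, hc0, hc1, hcU, hsupp⟩ := key i
    set J := insert i (univ.filter fun j => j ≠ i ∧ (S i j ≠ 0 ∨ S j i ≠ 0)) with hJ
    set a := J.inf' ⟨i, Finset.mem_insert_self i _⟩ U with ha
    set b := J.sup' ⟨i, Finset.mem_insert_self i _⟩ U with hb
    constructor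
    · calc a = ∑ j, c j * a := by rw [← Finset.sum_mul, hc1, one_mul]
        _ ≤ ∑ j, c j * U j := by
            apply Finset.sum_le_sum
            intro j _
            by_cases h : c j = 0
            · simp [h]
            · exact mul_le_mul_of_nonneg_left
                (Finset.inf'_le U (hsupp j h)) (hc0 j)
        _ = U' i := hcU.symm
    · calc U' i = ∑ j, c j * U j := hcU
        _ ≤ ∑ j, c j * b := by
            apply Finset.sum_le_sum
            intro j _
            by_cases h : c j = 0
            · simp [h]
            · exact mul_le_mul_of_nonneg_left
                (Finset.le_sup' U (hsupp j h)) (hc0 j)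
        _ = b := by rw [← Finset.sum_mul, hc1, one_mul]
  refine ⟨main, ?_⟩
  intro umin umax hb j
  obtain ⟨h1, h2⟩ := main j
  constructor
  · refine le_trans ?_ h1
    apply Finset.le_inf'
    intro k _
    exact (hb k).1
  · refine le_trans h2 ?_
    apply Finset.sup'_le
    intro k _
    exact (hb k).2
end

section
/- (Discrete maximum principle for general low-order viscosities, covering the bilinear viscosity of Section 4.1.) Let S = (s_{ij}), V = (v_{ij}) ∈ ℝ^{N×N} satisfy ∑_{j=1}^N s_{ij} = 0 and ∑_{j=1}^N v_{ij} = 0 for every i, and v_{ij} ≥ max(0, s_{ij}) for all i ≠ j. Let m_i > 0 for every i and Δt ≥ 0 with Δt·(s_{ii} − v_{ii}) ≤ m_i for every i. Then s_{ii} − v_{ii} ≥ 0 for every i, and the update U'_i = U_i − (Δt/m_i) ∑_{j=1}^N (s_{ij} − v_{ij}) U_j satisfies min_{1≤j≤N} U_j ≤ U'_i ≤ max_{1≤j≤N} U_j for every i; in particular, if u_min ≤ U_j ≤ u_max for all j then u_min ≤ U'_i ≤ u_max for all i. -/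
open Finset in
/-- Discrete maximum principle for general low-order viscosities (covering the bilinear
viscosity): if `S` and `V` have zero row sums, `V i j ≥ max (0, S i j)` off the diagonal,
and the CFL condition `Δt * (S i i - V i i) ≤ m i` holds, then `S i i - V i i ≥ 0` and
the low-order update stays within the global extrema of `U`; in particular uniform
bounds are preserved. -/
theorem discrete_maximum_principle_general_viscosity
    (N : ℕ) (S V : Fin N → Fin N → ℝ)
    (hSrow : ∀ i, ∑ j, S i j = 0)
    (hVrow : ∀ i, ∑ j, V i j = 0)
    (hVoff : ∀ i j, i ≠ j → max 0 (S i j) ≤ V i j)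
    (m : Fin N → ℝ) (hm : ∀ i, 0 < m i)
    (Δt : ℝ) (hΔt : 0 ≤ Δt)
    (hCFL : ∀ i, Δt * (S i i - V i i) ≤ m i)
    (U U' : Fin N → ℝ)
    (hU' : ∀ i, U' i = U i - (Δt / m i) * ∑ j, (S i j - V i j) * U j) :
    (∀ i, 0 ≤ S i i - V i i) ∧
    (∀ i, (univ : Finset (Fin N)).inf' ⟨i, mem_univ i⟩ U ≤ U' i ∧
          U' i ≤ (univ : Finset (Fin N)).sup' ⟨i, mem_univ i⟩ U) ∧
    (∀ umin umax : ℝ, (∀ j, umin ≤ U j ∧ U j ≤ umax) →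
      ∀ i, umin ≤ U' i ∧ U' i ≤ umax) := by
  -- convex-combination coefficients
  set c : Fin N → Fin N → ℝ :=
    fun i j => (if i = j then (1:ℝ) else 0) - (Δt / m i) * (S i j - V i j) with hc
  have hoff : ∀ i j, i ≠ j → S i j - V i j ≤ 0 := by
    intro i j hij
    have := hVoff i j hij
    have : S i j ≤ V i j := le_trans (le_max_right _ _) this
    linarith
  have hdiag : ∀ i, 0 ≤ S i i - V i i := by
    intro i
    have hS : S i i = -∑ j ∈ univ.erase i, S i j := by
      have := hSrow i
      rw [← Finset.add_sum_erase _ _ (mem_univ i)] at this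
      linarith
    have hV : V i i = -∑ j ∈ univ.erase i, V i j := by
      have := hVrow i
      rw [← Finset.add_sum_erase _ _ (mem_univ i)] at this
      linarith
    have hsum : ∑ j ∈ univ.erase i, S i j ≤ ∑ j ∈ univ.erase i, V i j := by
      apply Finset.sum_le_sum
      intro j hj
      have hij : i ≠ j := fun h => (Finset.mem_erase.mp hj).1 h.symm
      exact le_trans (le_max_right _ _) (hVoff i j hij)
    rw [hS, hV]; linarith
  -- coefficients are nonnegative
  have hcnn : ∀ i j, 0 ≤ c i j := by
    intro i j
    by_cases h : i = j
    · subst h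
      simp only [hc, if_pos rfl]
      have hmi := hm i
      have : (Δt / m i) * (S i i - V i i) ≤ 1 := by
        rw [div_mul_eq_mul_div, div_le_one hmi]
        exact hCFL i
      simp only [if_true]
      linarith
    · simp only [hc, if_neg h]
      have h1 : S i j - V i j ≤ 0 := hoff i j h
      have h2 : 0 ≤ Δt / m i := div_nonneg hΔt (hm i).le
      nlinarith
  -- coefficients sum to 1
  have hcsum : ∀ i, ∑ j, c i j = 1 := by
    intro i
    simp only [hc]
    rw [Finset.sum_sub_distrib, ← Finset.mul_sum]
    have h1 : ∑ j, (S i j - V i j) = 0 := by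
      rw [Finset.sum_sub_distrib, hSrow i, hVrow i]; ring
    rw [h1, Finset.sum_ite_eq univ i (fun _ => (1:ℝ))]
    simp
  -- U' as convex combination
  have hU'c : ∀ i, U' i = ∑ j, c i j * U j := by
    intro i
    rw [hU' i]
    have : ∑ j, c i j * U j
        = ∑ j, ((if i = j then (1:ℝ) else 0) * U j - Δt / m i * ((S i j - V i j) * U j)) :=
      Finset.sum_congr rfl fun j _ => by simp only [hc]; ring
    rw [this, Finset.sum_sub_distrib, ← Finset.mul_sum]
    simp [ite_mul]
  have key : ∀ (i : Fin N) (a b : ℝ), (∀ j, a ≤ U j ∧ U j ≤ b) → a ≤ U' i ∧ U' i ≤ b := by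
    intro i a b hab
    rw [hU'c i]
    constructor
    · calc a = ∑ j, c i j * a := by rw [← Finset.sum_mul, hcsum i, one_mul]
        _ ≤ ∑ j, c i j * U j :=
          Finset.sum_le_sum fun j _ => mul_le_mul_of_nonneg_left (hab j).1 (hcnn i j)
    · calc ∑ j, c i j * U j ≤ ∑ j, c i j * b :=
          Finset.sum_le_sum fun j _ => mul_le_mul_of_nonneg_left (hab j).2 (hcnn i j)
        _ = b := by rw [← Finset.sum_mul, hcsum i, one_mul]
  refine ⟨hdiag, fun i => ?_, fun umin umax h i => key i umin umax h⟩
  exact key i _ _ fun j =>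
    ⟨Finset.inf'_le _ (mem_univ j), Finset.le_sup' _ (mem_univ j)⟩
end

section
/- (Lemma 4.4.) Let k be a positive integer and i ∈ {1,…,N} an index such that k·γ_i < 1 and U_i^M ≠ U_i^m. Then the high-order update satisfies U_i^H ≤ U_i^M − (U_i^M − U_i^m)·((1 − θ_i)(1 − k γ_i) − θ_i (1 − ψ_i) γ_i^−) and U_i^H ≥ U_i^m + (U_i^M − U_i^m)·(θ_i (1 − k γ_i) − (1 − θ_i)(1 − ψ_i) γ_i^+). -/
set_option maxHeartbeats 1000000


open Finset in
/-- Lemma 4.4: bounds for the high-order update with scaled viscosity. Here `UM, Um`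
are the local max/min of `U` over the neighbor set `Nb i`, `θi` the normalized value,
`γi, γm, γp` the CFL quantities, and `UH` the high-order update with the elementwise
scaling `ψij = max (ψ i) (ψ j)` of the low-order viscosity. -/
theorem high_order_update_bounds
    (N : ℕ) (S V : Fin N → Fin N → ℝ)
    (hSrow : ∀ i, ∑ j, S i j = 0)
    (hVrow : ∀ i, ∑ j, V i j = 0)
    (hVoff : ∀ i j, i ≠ j → max 0 (S i j) ≤ V i j)
    (m : Fin N → ℝ) (hm : ∀ i, 0 < m i)
    (Δt : ℝ) (hΔt : 0 < Δt)
    (ψ : Fin N → ℝ) (hψ : ∀ i, 0 ≤ ψ i ∧ ψ i ≤ 1)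
    (Nb : Fin N → Finset (Fin N))
    (hNbself : ∀ i, i ∈ Nb i)
    (hNbzero : ∀ i j, j ∉ Nb i → j ≠ i → S i j = 0 ∧ V i j = 0)
    (U : Fin N → ℝ) (i : Fin N) (k : ℕ) (hk : 0 < k)
    (UM Um θi γi γm γp UH : ℝ)
    (hUM : UM = (Nb i).sup' ⟨i, hNbself i⟩ U)
    (hUm : Um = (Nb i).inf' ⟨i, hNbself i⟩ U)
    (hθ : θi = (U i - Um) / (UM - Um))
    (hγ : γi = (Δt / m i) * (S i i - V i i))
    (hγm : γm = (Δt / m i) * ∑ j ∈ univ.filter fun j => U j < U i, V i j)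
    (hγp : γp = (Δt / m i) * ∑ j ∈ univ.filter fun j => U i < U j, V i j)
    (hUH : UH = U i - (Δt / m i) * (∑ j, (S i j - V i j) * U j)
        + (Δt / m i) * ∑ j ∈ univ.erase i, (1 - max (ψ i) (ψ j)) * V i j * (U i - U j))
    (hkγ : (k : ℝ) * γi < 1)
    (hne : UM ≠ Um) :
    UH ≤ UM - (UM - Um) * ((1 - θi) * (1 - (k : ℝ) * γi) - θi * (1 - ψ i) * γm) ∧
    Um + (UM - Um) * (θi * (1 - (k : ℝ) * γi) - (1 - θi) * (1 - ψ i) * γp) ≤ UH := by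

  have hiNb := hNbself i
  have hδ : UM - Um ≠ 0 := sub_ne_zero.mpr hne
  have hUiUM : U i ≤ UM := by rw [hUM]; exact Finset.le_sup' U hiNb
  have hUmUi : Um ≤ U i := by rw [hUm]; exact Finset.inf'_le U hiNb
  have hUMle : ∀ j ∈ Nb i, U j ≤ UM := fun j hj => by rw [hUM]; exact Finset.le_sup' U hj
  have hUmle : ∀ j ∈ Nb i, Um ≤ U j := fun j hj => by rw [hUm]; exact Finset.inf'_le U hj
  have h1 : (UM - Um) * θi = U i - Um := by rw [hθ]; field_simp
  have h2 : (UM - Um) * (1 - θi) = UM - U i := by linear_combination -h1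
  set c := Δt / m i with hcdef
  have hc : 0 < c := div_pos hΔt (hm i)
  have hVpos : ∀ j : Fin N, j ≠ i → 0 ≤ V i j := fun j hj =>
    le_trans (le_max_left _ _) (hVoff i j (Ne.symm hj))
  have hVS : ∀ j : Fin N, j ≠ i → S i j ≤ V i j := fun j hj =>
    le_trans (le_max_right _ _) (hVoff i j (Ne.symm hj))
  set A := ∑ j ∈ univ.erase i, (V i j - S i j) * (U j - U i) with hA
  set B := ∑ j ∈ univ.erase i, (1 - max (ψ i) (ψ j)) * V i j * (U i - U j) with hBdef
  set σ := ∑ j ∈ univ.erase i, (V i j - S i j) with hσdef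
  set Sm := ∑ j ∈ univ.filter (fun j => U j < U i), V i j with hSmdef
  set Sp := ∑ j ∈ univ.filter (fun j => U i < U j), V i j with hSpdef
  -- row sums over erase
  have hSer : ∑ j ∈ univ.erase i, S i j = -S i i := by
    have h := Finset.sum_erase_add univ (fun j => S i j) (Finset.mem_univ i)
    rw [hSrow i] at h; linarith
  have hVer : ∑ j ∈ univ.erase i, V i j = -V i i := by
    have h := Finset.sum_erase_add univ (fun j => V i j) (Finset.mem_univ i)
    rw [hVrow i] at h; linarith
  have hσeq : σ = S i i - V i i := by
    rw [hσdef, Finset.sum_sub_distrib, hVer, hSer]; ring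
  have hγσ : γi = c * σ := by rw [hγ, hσeq]
  have hσ_nonneg : 0 ≤ σ := by
    rw [hσdef]
    exact Finset.sum_nonneg fun j hj => sub_nonneg.mpr (hVS j (Finset.ne_of_mem_erase hj))
  have hγi_nonneg : 0 ≤ γi := by rw [hγσ]; exact mul_nonneg hc.le hσ_nonneg
  have hk1 : (1:ℝ) ≤ (k:ℝ) := by exact_mod_cast hk
  -- rewrite UH
  have hsum0 : (∑ j, (S i j - V i j)) = 0 := by
    rw [Finset.sum_sub_distrib, hSrow, hVrow]; ring
  have hz : (∑ j, (S i j - V i j)) * U i = 0 := by rw [hsum0, zero_mul]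
  have hU1 : ∑ j, (S i j - V i j) * (U j - U i)
      = (∑ j, (S i j - V i j) * U j) - (∑ j, (S i j - V i j)) * U i := by
    rw [Finset.sum_mul, ← Finset.sum_sub_distrib]
    exact Finset.sum_congr rfl fun j _ => by ring
  have h0 := Finset.sum_erase_add univ (fun j => (S i j - V i j) * (U j - U i))
    (Finset.mem_univ i)
  simp only [sub_self, mul_zero] at h0
  have hAneg : -A = ∑ j ∈ univ.erase i, (S i j - V i j) * (U j - U i) := by
    rw [hA, ← Finset.sum_neg_distrib]
    exact Finset.sum_congr rfl fun j _ => by ring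
  have key : (∑ j, (S i j - V i j) * U j) = -A := by
    rw [hAneg]; linarith [h0, hU1, hz]
  have hUHe : UH = U i + c * A + c * B := by rw [hUH, key]; ring
  -- bounds on A
  have hA_up : A ≤ (UM - U i) * σ := by
    rw [hA, hσdef, Finset.mul_sum]
    apply Finset.sum_le_sum
    intro j hj
    have hji := Finset.ne_of_mem_erase hj
    by_cases hjN : j ∈ Nb i
    · have h := mul_le_mul_of_nonneg_left (by linarith [hUMle j hjN] : U j - U i ≤ UM - U i)
        (sub_nonneg.mpr (hVS j hji))
      calc (V i j - S i j) * (U j - U i) ≤ (V i j - S i j) * (UM - U i) := h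
        _ = (UM - U i) * (V i j - S i j) := mul_comm _ _
    · obtain ⟨hS0, hV0⟩ := hNbzero i j hjN hji
      simp [hS0, hV0]
  have hA_lo : (Um - U i) * σ ≤ A := by
    rw [hA, hσdef, Finset.mul_sum]
    apply Finset.sum_le_sum
    intro j hj
    have hji := Finset.ne_of_mem_erase hj
    by_cases hjN : j ∈ Nb i
    · have h := mul_le_mul_of_nonneg_left (by linarith [hUmle j hjN] : Um - U i ≤ U j - U i)
        (sub_nonneg.mpr (hVS j hji))
      calc (Um - U i) * (V i j - S i j) = (V i j - S i j) * (Um - U i) := mul_comm _ _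
        _ ≤ (V i j - S i j) * (U j - U i) := h
    · obtain ⟨hS0, hV0⟩ := hNbzero i j hjN hji
      simp [hS0, hV0]
  -- bounds on B
  have hB_up : B ≤ (1 - ψ i) * (U i - Um) * Sm := by
    have hstep : B ≤ ∑ j ∈ univ.erase i,
        (if U j < U i then (1 - ψ i) * (U i - Um) * V i j else 0) := by
      rw [hBdef]
      apply Finset.sum_le_sum
      intro j hj
      have hji := Finset.ne_of_mem_erase hj
      have hVj : 0 ≤ V i j := hVpos j hji
      have hm1 : ψ i ≤ max (ψ i) (ψ j) := le_max_left _ _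
      have hm2 : max (ψ i) (ψ j) ≤ 1 := max_le (hψ i).2 (hψ j).2
      by_cases hjlt : U j < U i
      · rw [if_pos hjlt]
        by_cases hjN : j ∈ Nb i
        · have h4 : Um ≤ U j := hUmle j hjN
          have hmm : (1 - max (ψ i) (ψ j)) * (U i - U j) ≤ (1 - ψ i) * (U i - Um) :=
            mul_le_mul (by linarith) (by linarith) (by linarith) (by linarith)
          calc (1 - max (ψ i) (ψ j)) * V i j * (U i - U j)
              = (1 - max (ψ i) (ψ j)) * (U i - U j) * V i j := by ring
            _ ≤ (1 - ψ i) * (U i - Um) * V i j := mul_le_mul_of_nonneg_right hmm hVj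
        · obtain ⟨_, hV0⟩ := hNbzero i j hjN hji
          simp [hV0]
      · rw [if_neg hjlt]
        push_neg at hjlt
        have : U i - U j ≤ 0 := by linarith
        have h5 : 0 ≤ (1 - max (ψ i) (ψ j)) * V i j := mul_nonneg (by linarith) hVj
        nlinarith [mul_nonpos_of_nonneg_of_nonpos h5 this]
    have hconv : ∑ j ∈ univ.erase i,
        (if U j < U i then (1 - ψ i) * (U i - Um) * V i j else 0)
        = (1 - ψ i) * (U i - Um) * Sm := by
      rw [hSmdef, Finset.mul_sum, Finset.sum_filter,
        ← Finset.sum_erase_add univ _ (Finset.mem_univ i)]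
      simp
    linarith
  have hB_lo : -((1 - ψ i) * (UM - U i) * Sp) ≤ B := by
    have hstep : (∑ j ∈ univ.erase i,
        (if U i < U j then -((1 - ψ i) * (UM - U i) * V i j) else 0)) ≤ B := by
      rw [hBdef]
      apply Finset.sum_le_sum
      intro j hj
      have hji := Finset.ne_of_mem_erase hj
      have hVj : 0 ≤ V i j := hVpos j hji
      have hm1 : ψ i ≤ max (ψ i) (ψ j) := le_max_left _ _
      have hm2 : max (ψ i) (ψ j) ≤ 1 := max_le (hψ i).2 (hψ j).2
      by_cases hjlt : U i < U j
      · rw [if_pos hjlt]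
        by_cases hjN : j ∈ Nb i
        · have h4 : U j ≤ UM := hUMle j hjN
          have hmm : (1 - max (ψ i) (ψ j)) * (U j - U i) ≤ (1 - ψ i) * (UM - U i) :=
            mul_le_mul (by linarith) (by linarith) (by linarith) (by linarith)
          calc -((1 - ψ i) * (UM - U i) * V i j)
              ≤ -((1 - max (ψ i) (ψ j)) * (U j - U i) * V i j) := by
                exact neg_le_neg (mul_le_mul_of_nonneg_right hmm hVj)
            _ = (1 - max (ψ i) (ψ j)) * V i j * (U i - U j) := by ring
        · obtain ⟨_, hV0⟩ := hNbzero i j hjN hji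
          simp [hV0]
      · rw [if_neg hjlt]
        push_neg at hjlt
        have : 0 ≤ U i - U j := by linarith
        have h5 : 0 ≤ (1 - max (ψ i) (ψ j)) * V i j := mul_nonneg (by linarith) hVj
        nlinarith [mul_nonneg h5 this]
    have hconv : (∑ j ∈ univ.erase i,
        (if U i < U j then -((1 - ψ i) * (UM - U i) * V i j) else 0))
        = -((1 - ψ i) * (UM - U i) * Sp) := by
      rw [hSpdef, Finset.mul_sum, ← Finset.sum_neg_distrib, Finset.sum_filter,
        ← Finset.sum_erase_add univ _ (Finset.mem_univ i)]
      simp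
    linarith
  -- final algebraic identities
  have e1 : UM - (UM - Um) * ((1 - θi) * (1 - (k : ℝ) * γi) - θi * (1 - ψ i) * γm)
      = U i + (k : ℝ) * γi * (UM - U i) + (1 - ψ i) * γm * (U i - Um) := by
    linear_combination (-(1 - (k : ℝ) * γi)) * h2 + ((1 - ψ i) * γm) * h1
  have e2 : Um + (UM - Um) * (θi * (1 - (k : ℝ) * γi) - (1 - θi) * (1 - ψ i) * γp)
      = U i - (k : ℝ) * γi * (U i - Um) - (1 - ψ i) * γp * (UM - U i) := by
    linear_combination (1 - (k : ℝ) * γi) * h1 - ((1 - ψ i) * γp) * h2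
  constructor
  · calc UH = U i + c * A + c * B := hUHe
      _ ≤ U i + c * ((UM - U i) * σ) + c * ((1 - ψ i) * (U i - Um) * Sm) := by
          have t1 := mul_le_mul_of_nonneg_left hA_up hc.le
          have t2 := mul_le_mul_of_nonneg_left hB_up hc.le
          linarith
      _ ≤ U i + (k : ℝ) * γi * (UM - U i) + (1 - ψ i) * γm * (U i - Um) := by
          rw [hγσ, hγm]
          nlinarith [mul_nonneg (mul_nonneg (mul_nonneg (sub_nonneg.mpr hk1) hc.le)
            hσ_nonneg) (sub_nonneg.mpr hUiUM)]
      _ = UM - (UM - Um) * ((1 - θi) * (1 - (k : ℝ) * γi) - θi * (1 - ψ i) * γm) := e1.symm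
  · calc Um + (UM - Um) * (θi * (1 - (k : ℝ) * γi) - (1 - θi) * (1 - ψ i) * γp)
        = U i - (k : ℝ) * γi * (U i - Um) - (1 - ψ i) * γp * (UM - U i) := e2
      _ ≤ U i + c * ((Um - U i) * σ) + c * (-((1 - ψ i) * (UM - U i) * Sp)) := by
          rw [hγσ, hγp]
          nlinarith [mul_nonneg (mul_nonneg (mul_nonneg (sub_nonneg.mpr hk1) hc.le)
            hσ_nonneg) (sub_nonneg.mpr hUmUi)]
      _ ≤ U i + c * A + c * B := by
          have t1 := mul_le_mul_of_nonneg_left hA_lo hc.le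
          have t2 := mul_le_mul_of_nonneg_left hB_lo hc.le
          linarith
      _ = UH := hUHe.symm
end

section
/- (Greedy limiter inequalities, Section 4.2.2.) Let k > 0, θ ∈ (0,1), γ ∈ ℝ with 0 ≤ kγ ≤ 1, and γ⁻ > 0, γ⁺ > 0 be real numbers. Define ψ := max(1 − (1 − kγ)·min((1 − θ)/(θ·γ⁻), θ/((1 − θ)·γ⁺)), 0). Then 0 ≤ ψ ≤ 1, (1 − θ)(1 − kγ) − θ(1 − ψ)γ⁻ ≥ 0, and θ(1 − kγ) − (1 − θ)(1 − ψ)γ⁺ ≥ 0. -/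
/-- Greedy limiter inequalities (Section 4.2.2): the greedy scaling factor
`ψ := max (1 - (1 - kγ) * min ((1 - θ)/(θ γ⁻)) (θ/((1 - θ) γ⁺))) 0` lies in `[0,1]` and
satisfies the two conditions under which Lemma 4.4 yields the local discrete
maximum principle. -/
theorem greedy_limiter_inequalities
    (k θ γ γm γp ψ : ℝ)
    (hk : 0 < k) (hθ0 : 0 < θ) (hθ1 : θ < 1)
    (hkγ0 : 0 ≤ k * γ) (hkγ1 : k * γ ≤ 1)
    (hγm : 0 < γm) (hγp : 0 < γp)
    (hψ : ψ = max (1 - (1 - k * γ) * min ((1 - θ) / (θ * γm)) (θ / ((1 - θ) * γp))) 0) :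
    (0 ≤ ψ ∧ ψ ≤ 1) ∧
    0 ≤ (1 - θ) * (1 - k * γ) - θ * (1 - ψ) * γm ∧
    0 ≤ θ * (1 - k * γ) - (1 - θ) * (1 - ψ) * γp := by
  set a := (1 - θ) / (θ * γm) with ha
  set b := θ / ((1 - θ) * γp) with hb
  have hθ1' : 0 < 1 - θ := by linarith
  have hc : 0 ≤ 1 - k * γ := by linarith
  have ha0 : 0 ≤ a := by positivity
  have hb0 : 0 ≤ b := by positivity
  have hm0 : 0 ≤ min a b := le_min ha0 hb0
  have hcm : 0 ≤ (1 - k * γ) * min a b := mul_nonneg hc hm0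
  have hψ0 : 0 ≤ ψ := by rw [hψ]; exact le_max_right _ _
  have hψ1 : ψ ≤ 1 := by rw [hψ]; apply max_le <;> linarith
  have h1ψ : 1 - ψ ≤ (1 - k * γ) * min a b := by
    have := le_max_left (1 - (1 - k * γ) * min a b) 0
    rw [← hψ] at this; linarith
  have h1ψ0 : 0 ≤ 1 - ψ := by linarith
  refine ⟨⟨hψ0, hψ1⟩, ?_, ?_⟩
  · have h1 : θ * (1 - ψ) * γm ≤ θ * ((1 - k * γ) * a) * γm := by
      have : (1 - k * γ) * min a b ≤ (1 - k * γ) * a :=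
        mul_le_mul_of_nonneg_left (min_le_left a b) hc
      exact mul_le_mul_of_nonneg_right
        (mul_le_mul_of_nonneg_left (h1ψ.trans this) hθ0.le) hγm.le
    have h2 : θ * ((1 - k * γ) * a) * γm = (1 - θ) * (1 - k * γ) := by
      rw [ha]; field_simp
    linarith
  · have h1 : (1 - θ) * (1 - ψ) * γp ≤ (1 - θ) * ((1 - k * γ) * b) * γp := by
      have : (1 - k * γ) * min a b ≤ (1 - k * γ) * b :=
        mul_le_mul_of_nonneg_left (min_le_right a b) hc
      exact mul_le_mul_of_nonneg_right
        (mul_le_mul_of_nonneg_left (h1ψ.trans this) hθ1'.le) hγp.le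
    have h2 : (1 - θ) * ((1 - k * γ) * b) * γp = θ * (1 - k * γ) := by
      rw [hb]; field_simp
    linarith
end

section
/- (Theorem 4.5, discrete maximum principle for the FCT limiter with inflow.) Assume U_i^{min} ≤ U_i^L ≤ U_i^{max} for every i ∈ {1,…,N}. Then the limited update U_i = U_i^L + (Δt/m_i)(∑_{j=1}^N l_{ij} t_{ij} + α_i l_i) satisfies U_i^{min} ≤ U_i ≤ U_i^{max} for every i. In particular, when l_i = 0 for all i, the same bounds hold for the standard FCT limiter without inflow contributions. -/
/-- Theorem 4.5: discrete maximum principle for the FCT limiter with inflow. If the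
low-order solution satisfies the prescribed bounds, then so does the limited update
`U i = UL i + (Δt / m i) * (∑ j, lij i j * t i j + α i * l i)`, where `α` is the
inflow limiter and `lij` the FCT limiting coefficients built from `P±, Q±, R±`. -/
theorem fct_inflow_discrete_maximum_principle
    (N : ℕ) (m : Fin N → ℝ) (hm : ∀ i, 0 < m i)
    (Δt : ℝ) (hΔt : 0 < Δt)
    (Umin Umax UL : Fin N → ℝ)
    (hbounds : ∀ i, Umin i ≤ Umax i)
    (t : Fin N → Fin N → ℝ) (l : Fin N → ℝ)
    (Pp Pm α Qp Qm Rp Rm : Fin N → ℝ) (lij : Fin N → Fin N → ℝ)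
    (hPp : ∀ i, Pp i = ∑ j, max 0 (t i j))
    (hPm : ∀ i, Pm i = ∑ j, min 0 (t i j))
    (hα : ∀ i, α i = if l i ≠ 0 then
        min 1 (max 0 (max ((m i / Δt) * (Umax i - UL i) / l i)
                         ((m i / Δt) * (Umin i - UL i) / l i)))
      else 1)
    (hQp : ∀ i, Qp i = (m i / Δt) * (Umax i - UL i) - α i * l i)
    (hQm : ∀ i, Qm i = (m i / Δt) * (Umin i - UL i) - α i * l i)
    (hRp : ∀ i, Rp i = if Pp i ≠ 0 then min 1 (Qp i / Pp i) else 1)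
    (hRm : ∀ i, Rm i = if Pm i ≠ 0 then min 1 (Qm i / Pm i) else 1)
    (hlij : ∀ i j, lij i j = if 0 ≤ t i j then min (Rp i) (Rm j) else min (Rm i) (Rp j))
    (hUL : ∀ i, Umin i ≤ UL i ∧ UL i ≤ Umax i)
    (U : Fin N → ℝ)
    (hU : ∀ i, U i = UL i + (Δt / m i) * (∑ j, lij i j * t i j + α i * l i)) :
    ∀ i, Umin i ≤ U i ∧ U i ≤ Umax i := by
  have hc : ∀ i, 0 < m i / Δt := fun i => div_pos (hm i) hΔt
  have ha : ∀ i, 0 ≤ (m i / Δt) * (Umax i - UL i) :=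
    fun i => mul_nonneg (hc i).le (sub_nonneg.2 (hUL i).2)
  have hb : ∀ i, (m i / Δt) * (Umin i - UL i) ≤ 0 :=
    fun i => mul_nonpos_of_nonneg_of_nonpos (hc i).le (sub_nonpos.2 (hUL i).1)
  -- the inflow term α i * l i stays within the admissible corrections
  have hαl : ∀ i, (m i / Δt) * (Umin i - UL i) ≤ α i * l i ∧
      α i * l i ≤ (m i / Δt) * (Umax i - UL i) := by
    intro i
    have ha' := ha i; have hb' := hb i
    set a := (m i / Δt) * (Umax i - UL i) with hadef
    set b := (m i / Δt) * (Umin i - UL i) with hbdef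
    rw [hα]
    by_cases hl : l i = 0
    · simp [hl]; exact ⟨hb', ha'⟩
    · simp only [hl, ne_eq, not_false_iff, if_true]
      rcases lt_or_gt_of_ne hl with hlt | hgt
      · -- l i < 0
        have h1 : a / l i ≤ 0 := div_nonpos_of_nonneg_of_nonpos ha' hlt.le
        have h2 : 0 ≤ b / l i := div_nonneg_iff.mpr (Or.inr ⟨hb', hlt.le⟩)
        rw [max_eq_right (h1.trans h2), max_eq_right h2]
        constructor
        · have : min 1 (b / l i) ≤ b / l i := min_le_right _ _
          have := mul_le_mul_of_nonpos_right this hlt.le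
          rwa [div_mul_cancel₀ _ hl] at this
        · have h0 : 0 ≤ min 1 (b / l i) := le_min zero_le_one h2
          exact (mul_nonpos_of_nonneg_of_nonpos h0 hlt.le).trans ha'
      · -- 0 < l i
        have h1 : 0 ≤ a / l i := div_nonneg ha' hgt.le
        have h2 : b / l i ≤ 0 := div_nonpos_of_nonpos_of_nonneg hb' hgt.le
        rw [max_eq_left (h2.trans h1), max_eq_right h1]
        constructor
        · have h0 : 0 ≤ min 1 (a / l i) := le_min zero_le_one h1
          exact hb'.trans (mul_nonneg h0 hgt.le)
        · have : min 1 (a / l i) ≤ a / l i := min_le_right _ _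
          have := mul_le_mul_of_nonneg_right this hgt.le
          rwa [div_mul_cancel₀ _ hl] at this
  have hQp0 : ∀ i, 0 ≤ Qp i := by
    intro i; rw [hQp]; linarith [(hαl i).2]
  have hQm0 : ∀ i, Qm i ≤ 0 := by
    intro i; rw [hQm]; linarith [(hαl i).1]
  have hPp0 : ∀ i, 0 ≤ Pp i := by
    intro i; rw [hPp]
    exact Finset.sum_nonneg fun j _ => le_max_left _ _
  have hPm0 : ∀ i, Pm i ≤ 0 := by
    intro i; rw [hPm]
    exact Finset.sum_nonpos fun j _ => min_le_left _ _
  have hRp01 : ∀ i, 0 ≤ Rp i ∧ Rp i ≤ 1 := by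
    intro i; rw [hRp]
    by_cases h : Pp i ≠ 0
    · rw [if_pos h]
      have hPp' : 0 < Pp i := lt_of_le_of_ne (hPp0 i) (Ne.symm h)
      exact ⟨le_min zero_le_one (div_nonneg (hQp0 i) hPp'.le), min_le_left _ _⟩
    · rw [if_neg h]; exact ⟨zero_le_one, le_refl 1⟩
  have hRm01 : ∀ i, 0 ≤ Rm i ∧ Rm i ≤ 1 := by
    intro i; rw [hRm]
    by_cases h : Pm i ≠ 0
    · rw [if_pos h]
      have hPm' : Pm i < 0 := lt_of_le_of_ne (hPm0 i) h
      exact ⟨le_min zero_le_one (div_nonneg_iff.mpr (Or.inr ⟨hQm0 i, hPm'.le⟩)),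
        min_le_left _ _⟩
    · rw [if_neg h]; exact ⟨zero_le_one, le_refl 1⟩
  have hlij0 : ∀ i j, 0 ≤ lij i j := by
    intro i j; rw [hlij]
    by_cases ht : 0 ≤ t i j
    · rw [if_pos ht]; exact le_min (hRp01 i).1 (hRm01 j).1
    · rw [if_neg ht]; exact le_min (hRm01 i).1 (hRp01 j).1
  have hRpPp : ∀ i, Rp i * Pp i ≤ Qp i := by
    intro i
    by_cases h : Pp i = 0
    · rw [h, mul_zero]; exact hQp0 i
    · have hPp' : 0 < Pp i := lt_of_le_of_ne (hPp0 i) (Ne.symm h)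
      have hle : Rp i ≤ Qp i / Pp i := by
        rw [hRp, if_pos h]; exact min_le_right _ _
      calc Rp i * Pp i ≤ (Qp i / Pp i) * Pp i :=
            mul_le_mul_of_nonneg_right hle hPp'.le
        _ = Qp i := div_mul_cancel₀ _ h
  have hQmRmPm : ∀ i, Qm i ≤ Rm i * Pm i := by
    intro i
    by_cases h : Pm i = 0
    · rw [h, mul_zero]; exact hQm0 i
    · have hPm' : Pm i < 0 := lt_of_le_of_ne (hPm0 i) h
      have hle : Rm i ≤ Qm i / Pm i := by
        rw [hRm, if_pos h]; exact min_le_right _ _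
      calc Qm i = (Qm i / Pm i) * Pm i := (div_mul_cancel₀ _ h).symm
        _ ≤ Rm i * Pm i := mul_le_mul_of_nonpos_right hle hPm'.le
  have hsum_le : ∀ i, ∑ j, lij i j * t i j ≤ Rp i * Pp i := by
    intro i
    rw [hPp, Finset.mul_sum]
    apply Finset.sum_le_sum
    intro j _
    by_cases ht : 0 ≤ t i j
    · rw [max_eq_right ht, hlij, if_pos ht]
      exact mul_le_mul_of_nonneg_right (min_le_left _ _) ht
    · push_neg at ht
      rw [max_eq_left ht.le, mul_zero]
      exact mul_nonpos_of_nonneg_of_nonpos (hlij0 i j) ht.le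
  have hsum_ge : ∀ i, Rm i * Pm i ≤ ∑ j, lij i j * t i j := by
    intro i
    rw [hPm, Finset.mul_sum]
    apply Finset.sum_le_sum
    intro j _
    by_cases ht : 0 ≤ t i j
    · rw [min_eq_left ht, mul_zero]
      exact mul_nonneg (hlij0 i j) ht
    · push_neg at ht
      rw [min_eq_right ht.le, hlij, if_neg (not_le.2 ht)]
      exact mul_le_mul_of_nonpos_right (min_le_left _ _) ht.le
  intro i
  have hinv : (Δt / m i) * (m i / Δt) = 1 := by
    field_simp [(hm i).ne', hΔt.ne']
  have hd : 0 < Δt / m i := div_pos hΔt (hm i)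
  have hup : ∑ j, lij i j * t i j + α i * l i ≤ (m i / Δt) * (Umax i - UL i) := by
    have := (hsum_le i).trans (hRpPp i)
    rw [hQp] at this; linarith
  have hdn : (m i / Δt) * (Umin i - UL i) ≤ ∑ j, lij i j * t i j + α i * l i := by
    have := (hQmRmPm i).trans (hsum_ge i)
    rw [hQm] at this; linarith
  constructor
  · rw [hU]
    have := mul_le_mul_of_nonneg_left hdn hd.le
    rw [← mul_assoc, hinv, one_mul] at this
    linarith
  · rw [hU]
    have := mul_le_mul_of_nonneg_left hup hd.le
    rw [← mul_assoc, hinv, one_mul] at this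
    linarith
end

section
/- (Global bound, Theorem 5.1.) Let a, b, c ∈ ℝ² and let f : ℝ² → ℝ be an affine map. Let u_min ≤ u_max be real numbers and suppose the values of f at the three edge midpoints (a+b)/2, (b+c)/2, (c+a)/2 all lie in the interval [u_min, u_max]. Then for every point x in the convex hull of {a, b, c}, one has 2·u_min − u_max ≤ f(x) ≤ 2·u_max − u_min. -/
/-- Global bound (Theorem 5.1): an affine function on ℝ² whose values at the three
edge midpoints of a triangle lie in `[u_min, u_max]` is bounded on the whole triangle
(the convex hull of the vertices) by `2 u_min - u_max` below and `2 u_max - u_min`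
above. -/
theorem affine_global_bound_from_midpoints
    (f : (ℝ × ℝ) →ᵃ[ℝ] ℝ) (a b c : ℝ × ℝ)
    (umin umax : ℝ) (h : umin ≤ umax)
    (hab : umin ≤ f (midpoint ℝ a b) ∧ f (midpoint ℝ a b) ≤ umax)
    (hbc : umin ≤ f (midpoint ℝ b c) ∧ f (midpoint ℝ b c) ≤ umax)
    (hca : umin ≤ f (midpoint ℝ c a) ∧ f (midpoint ℝ c a) ≤ umax) :
    ∀ x ∈ convexHull ℝ ({a, b, c} : Set (ℝ × ℝ)),
      2 * umin - umax ≤ f x ∧ f x ≤ 2 * umax - umin := by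
  have key : ∀ p q : ℝ × ℝ, f (midpoint ℝ p q) = (f p + f q) / 2 := by
    intro p q
    rw [f.map_midpoint, midpoint_eq_smul_add]
    simp [smul_eq_mul]; ring
  rw [key] at hab hbc hca
  have ha : f a ∈ Set.Icc (2*umin - umax) (2*umax - umin) := by
    constructor <;> nlinarith [hab.1, hab.2, hbc.1, hbc.2, hca.1, hca.2]
  have hb : f b ∈ Set.Icc (2*umin - umax) (2*umax - umin) := by
    constructor <;> nlinarith [hab.1, hab.2, hbc.1, hbc.2, hca.1, hca.2]
  have hc : f c ∈ Set.Icc (2*umin - umax) (2*umax - umin) := by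
    constructor <;> nlinarith [hab.1, hab.2, hbc.1, hbc.2, hca.1, hca.2]
  have hconv : Convex ℝ (f ⁻¹' Set.Icc (2*umin - umax) (2*umax - umin)) :=
    (convex_Icc _ _).affine_preimage f
  have hsub : convexHull ℝ ({a, b, c} : Set (ℝ × ℝ)) ⊆
      f ⁻¹' Set.Icc (2*umin - umax) (2*umax - umin) := by
    apply convexHull_min _ hconv
    intro x hx
    rcases hx with rfl | rfl | rfl <;> assumption
  intro x hx
  exact hsub hx
end

section
/- (Sharpness of the global bound.) There exist an affine map f : ℝ² → ℝ and affinely independent points a, b, c ∈ ℝ² such that the values of f at the three edge midpoints (a+b)/2, (b+c)/2, (c+a)/2 all lie in the interval [−1, 1], yet f(a) = −3 = 2·(−1) − 1; hence the lower bound 2·u_min − u_max in the global bound theorem is attained and cannot be improved. -/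
noncomputable def myf : (ℝ × ℝ) →ᵃ[ℝ] ℝ where
  toFun p := 4 * p.1 + 4 * p.2 - 3
  linear := 4 • (LinearMap.fst ℝ ℝ ℝ) + 4 • (LinearMap.snd ℝ ℝ ℝ)
  map_vadd' p v := by simp [Prod.fst_add, Prod.snd_add]; ring

lemma tri_indep : AffineIndependent ℝ ![((0:ℝ),(0:ℝ)), (1,0), (0,1)] := by
  rw [affineIndependent_iff_not_collinear_set]
  intro hc
  rw [collinear_iff_of_mem (Set.mem_insert _ _)] at hc
  obtain ⟨v, hv⟩ := hc
  obtain ⟨r, hr⟩ := hv (1,0) (by simp)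
  obtain ⟨s, hs⟩ := hv (0,1) (by simp)
  have hr1 := congrArg Prod.fst hr
  have hr2 := congrArg Prod.snd hr
  have hs1 := congrArg Prod.fst hs
  have hs2 := congrArg Prod.snd hs
  simp [Prod.smul_def] at hr1 hr2 hs1 hs2
  have key : (1:ℝ) = 0 := by
    calc (1:ℝ) = (r * v.1) * (s * v.2) := by rw [← hr1, ← hs2]; ring
    _ = (r * v.2) * (s * v.1) := by ring
    _ = 0 := by rcases hr2 with h | h <;> rw [h] <;> ring
  exact one_ne_zero key

/-- Sharpness of the global bound: there are an affine map `f : ℝ² → ℝ` and an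
affinely independent triple `a, b, c` whose three edge-midpoint values of `f` lie in
`[-1, 1]`, yet `f a = -3 = 2 * (-1) - 1`; hence the lower bound `2 u_min - u_max`
is attained. -/
theorem global_bound_sharp :
    ∃ (f : (ℝ × ℝ) →ᵃ[ℝ] ℝ) (a b c : ℝ × ℝ),
      AffineIndependent ℝ ![a, b, c] ∧
      (-1 ≤ f (midpoint ℝ a b) ∧ f (midpoint ℝ a b) ≤ 1) ∧
      (-1 ≤ f (midpoint ℝ b c) ∧ f (midpoint ℝ b c) ≤ 1) ∧
      (-1 ≤ f (midpoint ℝ c a) ∧ f (midpoint ℝ c a) ≤ 1) ∧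
      f a = -3 ∧ (-3 : ℝ) = 2 * (-1) - 1 := by
  refine ⟨myf, (0,0), (1,0), (0,1), tri_indep, ?_, ?_, ?_, ?_, by norm_num⟩
  all_goals
    simp only [myf, midpoint_eq_smul_add, Prod.smul_def, Prod.mk_add_mk, AffineMap.coe_mk,
      smul_eq_mul]
    norm_num
end
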